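/- Let z : [0,∞) → ℝ_+^I be continuous with inf_{t≥δ} ‖z(t)‖_1 > 0 for all δ > 0, and suppose w : [0,∞) → ℝ^I is differentiable on (0,∞), continuous at 0, with w(0)=0, w_1'(t) = −w_1(t)(μ_1/‖z(t)‖_1 + ν), and w_i'(t) = w_{i-1}(t) μ_{i-1}/‖z(t)‖_1 − w_i(t)(μ_i/‖z(t)‖_1 + ν) for i ≥ 2. Then w ≡ 0. -/

import Mathlib

open Set

/-- if `z : [0,∞) → ℝ_+^I` is continuous with `‖z‖₁` bounded away from `0`
on `[δ,∞)` for each `δ > 0`, and `w` solves the linear ODE system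
`w_1' = −w_1(μ_1/‖z‖₁ + ν)`, `w_i' = w_{i-1} μ_{i-1}/‖z‖₁ − w_i(μ_i/‖z‖₁ + ν)` on `(0,∞)`,
is continuous at `0` with `w(0) = 0`, then `w ≡ 0` on `[0,∞)`. -/
lemma key_zero (f a : ℝ → ℝ) (hf0 : f 0 = 0)
    (hfc : ContinuousWithinAt f (Set.Ici 0) 0)
    (hd : ∀ t > (0:ℝ), HasDerivAt f (-(f t) * a t) t)
    (ha : ∀ t > (0:ℝ), 0 ≤ a t) :
    ∀ t ≥ (0:ℝ), f t = 0 := by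
  set g : ℝ → ℝ := fun t => f t * f t with hg
  have hgc : ContinuousOn g (Set.Ici 0) := by
    intro t ht
    rcases eq_or_lt_of_le (Set.mem_Ici.mp ht : (0:ℝ) ≤ t) with h | h
    · subst h; exact hfc.mul hfc
    · exact (((hd t h).continuousAt).mul ((hd t h).continuousAt)).continuousWithinAt
  have hganti : AntitoneOn g (Set.Ici 0) := by
    apply antitoneOn_of_deriv_nonpos (convex_Ici 0) hgc
    · intro t ht
      rw [interior_Ici] at ht
      exact ((hd t ht).mul (hd t ht)).differentiableAt.differentiableWithinAt
    · intro t ht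
      rw [interior_Ici] at ht
      have hD : HasDerivAt g (-(f t) * a t * f t + f t * (-(f t) * a t)) t :=
        (hd t ht).mul (hd t ht)
      rw [hD.deriv]
      have : -(f t) * a t * f t + f t * (-(f t) * a t) = -(2 * (f t * f t) * a t) := by ring
      rw [this]
      have := mul_nonneg (mul_nonneg (by norm_num : (0:ℝ) ≤ 2) (mul_self_nonneg (f t))) (ha t ht)
      linarith
  intro t ht
  have h1 : g t ≤ g 0 := hganti (Set.mem_Ici.mpr (le_refl 0)) (Set.mem_Ici.mpr ht) ht
  have h2 : g 0 = 0 := by simp [hg, hf0]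
  have h3 : 0 ≤ g t := mul_self_nonneg (f t)
  have : f t * f t = 0 := le_antisymm (by rw [← h2]; exact h1) h3
  exact mul_self_eq_zero.mp this

theorem linearized_uniqueness (n : ℕ) (ν : ℝ) (hν : 0 < ν)
    (μ : Fin (n + 1) → ℝ) (hμ : ∀ i, 0 < μ i)
    (z : ℝ → Fin (n + 1) → ℝ)
    (hzc : ∀ i, ContinuousOn (fun t => z t i) (Set.Ici 0))
    (hznn : ∀ t ≥ (0 : ℝ), ∀ i, 0 ≤ z t i)
    (hzinf : ∀ δ > (0 : ℝ), ∃ ε > (0 : ℝ), ∀ t ≥ δ, ε ≤ ∑ i, z t i)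
    (w : ℝ → Fin (n + 1) → ℝ)
    (hw0 : ∀ i, w 0 i = 0)
    (hwc : ∀ i, ContinuousWithinAt (fun t => w t i) (Set.Ici 0) 0)
    (hd0 : ∀ t > (0 : ℝ),
      HasDerivAt (fun s => w s 0) (-(w t 0) * (μ 0 / (∑ i, z t i) + ν)) t)
    (hdi : ∀ t > (0 : ℝ), ∀ i : Fin (n + 1), i ≠ 0 →
      HasDerivAt (fun s => w s i)
        (w t (i - 1) * μ (i - 1) / (∑ j, z t j) - w t i * (μ i / (∑ j, z t j) + ν)) t) :
    ∀ t ≥ (0 : ℝ), ∀ i, w t i = 0 := by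
  have hSnn : ∀ t > (0:ℝ), 0 ≤ ∑ i, z t i := fun t ht =>
    Finset.sum_nonneg fun i _ => hznn t ht.le i
  have ha : ∀ j : Fin (n + 1), ∀ t > (0:ℝ), 0 ≤ μ j / (∑ i, z t i) + ν := by
    intro j t ht
    have := div_nonneg (hμ j).le (hSnn t ht)
    linarith
  suffices h : ∀ i : Fin (n + 1), ∀ t ≥ (0:ℝ), w t i = 0 by
    intro t ht i; exact h i t ht
  intro i
  induction i using Fin.induction with
  | zero =>
    exact key_zero (fun t => w t 0) (fun t => μ 0 / (∑ i, z t i) + ν) (hw0 0) (hwc 0)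
      hd0 (ha 0)
  | succ i ih =>
    apply key_zero (fun t => w t i.succ) (fun t => μ i.succ / (∑ j, z t j) + ν) (hw0 _)
      (hwc i.succ)
    · intro t ht
      have hsub : (i.succ : Fin (n + 1)) - 1 = i.castSucc := by
        rw [sub_eq_iff_eq_add, ← Fin.coeSucc_eq_succ]
      have hD := hdi t ht i.succ (Fin.succ_ne_zero i)
      rw [hsub, ih t ht.le] at hD
      convert hD using 1
      ring
    · exact ha i.succ
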